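/- Let ρ > 1, s ∈ (0,1), λ > 0, and define A_k^ρ(η) := exp(λ·Π_ρ(⟨k,η⟩)) where Π_ρ(r) = ∫₀^r max(s·x^{s−1} − s·ρ^{s−1}, 0) dx and ⟨k,η⟩ = (1+k²+η²)^{1/2}. Then there exists C = C(λ,s), independent of ρ, such that A_k^ρ(α+β) ≤ C · A_k^ρ(α) · e^{λ⟨β⟩^s} for all α, β ∈ ℝ and all integers k. -/
import Mathlib

noncomputable def hWeight (s ρ x : ℝ) : ℝ :=
  if x ≤ ρ then s * x ^ (s - 1) - s * ρ ^ (s - 1) else 0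

noncomputable def PiWeight (s ρ r : ℝ) : ℝ := ∫ x in (0 : ℝ)..r, hWeight s ρ x

noncomputable def jap (k : ℤ) (η : ℝ) : ℝ := Real.sqrt (1 + (k : ℝ) ^ 2 + η ^ 2)

noncomputable def japR (β : ℝ) : ℝ := Real.sqrt (1 + β ^ 2)

noncomputable def Aweight (s ρ lam : ℝ) (k : ℤ) (η : ℝ) : ℝ :=
  Real.exp (lam * PiWeight s ρ (jap k η))

lemma rpow_subadd {x y p : ℝ} (hx : 0 ≤ x) (hy : 0 ≤ y) (hp : 0 ≤ p) (hp1 : p ≤ 1) :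
    (x + y) ^ p ≤ x ^ p + y ^ p := by
  have h := NNReal.rpow_add_le_add_rpow x.toNNReal y.toNNReal hp hp1
  rw [← Real.coe_toNNReal x hx, ← Real.coe_toNNReal y hy, ← NNReal.coe_add,
    ← NNReal.coe_rpow, ← NNReal.coe_rpow, ← NNReal.coe_rpow, ← NNReal.coe_add,
    NNReal.coe_le_coe]
  exact h

lemma hWeight_eq_indicator (s ρ : ℝ) :
    hWeight s ρ = Set.indicator (Set.Iic ρ) (fun x => s * x ^ (s - 1) - s * ρ ^ (s - 1)) := by
  funext x
  simp [hWeight, Set.indicator, Set.mem_Iic]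

lemma hWeight_intervalIntegrable {s : ℝ} (hs : s ∈ Set.Ioo (0 : ℝ) 1) (ρ c d : ℝ) :
    IntervalIntegrable (hWeight s ρ) MeasureTheory.volume c d := by
  have hg : IntervalIntegrable (fun x : ℝ => s * x ^ (s - 1) - s * ρ ^ (s - 1))
      MeasureTheory.volume c d := by
    apply IntervalIntegrable.sub
    · exact (intervalIntegral.intervalIntegrable_rpow' (by linarith [hs.1])).const_mul s
    · exact intervalIntegrable_const
  rw [hWeight_eq_indicator]
  rw [intervalIntegrable_iff] at hg ⊢
  exact hg.indicator measurableSet_Iic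

lemma hWeight_nonneg {s : ℝ} (hs : s ∈ Set.Ioo (0 : ℝ) 1) {ρ x : ℝ} (hx : 0 < x) :
    0 ≤ hWeight s ρ x := by
  unfold hWeight
  split_ifs with h
  · have : ρ ^ (s - 1) ≤ x ^ (s - 1) :=
      Real.rpow_le_rpow_of_nonpos hx h (by linarith [hs.2])
    nlinarith [hs.1]
  · exact le_refl 0

lemma hWeight_le {s : ℝ} (hs : s ∈ Set.Ioo (0 : ℝ) 1) {ρ x : ℝ} (hρ : 0 < ρ) (hx : 0 ≤ x) :
    hWeight s ρ x ≤ s * x ^ (s - 1) := by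
  unfold hWeight
  split_ifs with h
  · have : 0 < ρ ^ (s - 1) := Real.rpow_pos_of_pos hρ _
    nlinarith [hs.1]
  · exact mul_nonneg hs.1.le (Real.rpow_nonneg hx _)

theorem Aweight_submultiplicative (s lam : ℝ) (hs : s ∈ Set.Ioo (0 : ℝ) 1) (hlam : 0 < lam) :
    ∃ C > (0 : ℝ), ∀ ρ : ℝ, 1 < ρ → ∀ (k : ℤ) (α β : ℝ),
      Aweight s ρ lam k (α + β) ≤ C * Aweight s ρ lam k α * Real.exp (lam * japR β ^ s) := by
  refine ⟨1, one_pos, fun ρ hρ k α β => ?_⟩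
  have hρ0 : (0 : ℝ) < ρ := by linarith
  set a := jap k (α + β) with ha
  set b := jap k α with hb
  have hb1 : 1 ≤ b := by
    rw [hb, jap, Real.one_le_sqrt]; nlinarith [sq_nonneg (k:ℝ), sq_nonneg α]
  have ha1 : 1 ≤ a := by
    rw [ha, jap, Real.one_le_sqrt]; nlinarith [sq_nonneg (k:ℝ), sq_nonneg (α+β)]
  have hjapR1 : 1 ≤ japR β := by
    rw [japR, Real.one_le_sqrt]; nlinarith [sq_nonneg β]
  -- triangle: a ≤ b + japR β
  have htri : a ≤ b + japR β := by
    have hbnn : 0 ≤ b := by linarith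
    have hjnn : 0 ≤ japR β := by linarith
    have hbα : |α| ≤ b := by
      rw [hb, jap, ← Real.sqrt_sq_eq_abs]
      apply Real.sqrt_le_sqrt; nlinarith [sq_nonneg (k:ℝ)]
    have hjβ : |β| ≤ japR β := by
      rw [japR, ← Real.sqrt_sq_eq_abs]
      apply Real.sqrt_le_sqrt; nlinarith
    rw [ha, jap]
    rw [show b + japR β = Real.sqrt ((b + japR β)^2) by
      rw [Real.sqrt_sq (by linarith)]]
    apply Real.sqrt_le_sqrt
    have hb2 : b ^ 2 = 1 + (k:ℝ)^2 + α^2 := by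
      rw [hb, jap, Real.sq_sqrt (by nlinarith [sq_nonneg (k:ℝ), sq_nonneg α])]
    have hj2 : japR β ^ 2 = 1 + β^2 := by
      rw [japR, Real.sq_sqrt (by nlinarith)]
    nlinarith [abs_nonneg α, abs_nonneg β, sq_abs α, sq_abs β,
      mul_le_mul hbα hjβ (abs_nonneg β) hbnn, le_abs_self (α*β), abs_mul α β]
  -- key: PiWeight s ρ a ≤ PiWeight s ρ b + japR β ^ s
  have hkey : PiWeight s ρ a ≤ PiWeight s ρ b + japR β ^ s := by
    have hjs : 0 ≤ japR β ^ s := Real.rpow_nonneg (by linarith) s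
    rcases le_or_gt a b with hab | hab
    · -- a ≤ b : monotone
      have hsplit : PiWeight s ρ b - PiWeight s ρ a = ∫ x in a..b, hWeight s ρ x := by
        have := intervalIntegral.integral_add_adjacent_intervals
          (hWeight_intervalIntegrable hs ρ 0 a) (hWeight_intervalIntegrable hs ρ a b)
        rw [PiWeight, PiWeight]; linarith [this]
      have hpos : 0 ≤ ∫ x in a..b, hWeight s ρ x := by
        apply intervalIntegral.integral_nonneg hab
        intro x hx
        exact hWeight_nonneg hs (by linarith [hx.1])
      linarith
    · -- b < a
      have hsplit : PiWeight s ρ a - PiWeight s ρ b = ∫ x in b..a, hWeight s ρ x := by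
        have := intervalIntegral.integral_add_adjacent_intervals
          (hWeight_intervalIntegrable hs ρ 0 b) (hWeight_intervalIntegrable hs ρ b a)
        rw [PiWeight, PiWeight]; linarith [this]
      have hle : (∫ x in b..a, hWeight s ρ x) ≤ ∫ x in b..a, s * x ^ (s - 1) := by
        apply intervalIntegral.integral_mono_on hab.le
          (hWeight_intervalIntegrable hs ρ b a)
          ((intervalIntegral.intervalIntegrable_rpow' (by linarith [hs.1])).const_mul s)
        intro x hx
        exact hWeight_le hs hρ0 (by linarith [hx.1])
      have hcomp : (∫ x in b..a, s * x ^ (s - 1)) = a ^ s - b ^ s := by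
        rw [intervalIntegral.integral_const_mul, integral_rpow (Or.inl (by linarith [hs.1]))]
        have hss : s - 1 + 1 = s := by ring
        have hsne : s ≠ 0 := ne_of_gt hs.1
        rw [hss]; field_simp
      have hsub : a ^ s ≤ b ^ s + japR β ^ s := by
        calc a ^ s ≤ (b + japR β) ^ s :=
              Real.rpow_le_rpow (by linarith) htri (le_of_lt hs.1)
          _ ≤ b ^ s + japR β ^ s :=
              rpow_subadd (by linarith) (by linarith) (le_of_lt hs.1) (le_of_lt hs.2)
      linarith
  -- conclude
  have : lam * PiWeight s ρ a ≤ lam * PiWeight s ρ b + lam * (japR β ^ s) := by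
    nlinarith
  calc Aweight s ρ lam k (α + β) = Real.exp (lam * PiWeight s ρ a) := rfl
    _ ≤ Real.exp (lam * PiWeight s ρ b + lam * (japR β ^ s)) := Real.exp_le_exp.mpr this
    _ = 1 * Aweight s ρ lam k α * Real.exp (lam * japR β ^ s) := by
        rw [Real.exp_add, one_mul, Aweight, hb]
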